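/- Let B be a Banach space and M a closed subspace of B which is complemented, i.e. there exists a bounded linear projection from B onto M. If B is a dual Banach space and M is weak*-closed in B, then the infimum defining the projection constant λ(M,B) is attained: there exists a bounded linear projection P : B → M onto M with ‖P‖ = λ(M,B). -/

import Mathlib

open scoped ENNReal
open NormedSpace Metric Filter Topology

set_option maxHeartbeats 400000

/-- The projection constant `λ(M, B)` of a subset `M` of a normed space `B`:
the infimum of `‖P‖` over all bounded linear projections `P : B → B` whose range lies in `M`
and which restrict to the identity on `M` (i.e. projections from `B` onto `M`);
it equals `∞` when no such projection exists. -/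
noncomputable def projConst {B : Type*} [NormedAddCommGroup B] [NormedSpace ℂ B]
    (M : Set B) : ℝ≥0∞ :=
  ⨅ P : {P : B →L[ℂ] B // (∀ x, P x ∈ M) ∧ ∀ x ∈ M, P x = x}, (‖P.1‖₊ : ℝ≥0∞)

/-- If `B = X*` is a dual Banach space and `M` is a weak*-closed subspace of `B` which is
complemented (there is a bounded linear projection from `B` onto `M`), then the infimum
defining `λ(M,B)` is attained: there is a bounded linear projection `P` from `B` onto `M` with
`‖P‖ = λ(M,B)`. -/
theorem attained_projection_constant {X : Type*} [NormedAddCommGroup X] [NormedSpace ℂ X]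
    (M : Submodule ℂ (StrongDual ℂ X))
    (hM : IsClosed (StrongDual.toWeakDual '' (M : Set (StrongDual ℂ X))))
    (hcompl : ∃ P : StrongDual ℂ X →L[ℂ] StrongDual ℂ X,
      (∀ x, P x ∈ M) ∧ ∀ x ∈ M, P x = x) :
    ∃ P : StrongDual ℂ X →L[ℂ] StrongDual ℂ X,
      (∀ x, P x ∈ M) ∧ (∀ x ∈ M, P x = x) ∧
        (‖P‖₊ : ℝ≥0∞) = projConst (M : Set (StrongDual ℂ X)) := by
  classical
  obtain ⟨P₀, hP₀⟩ := hcompl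
  haveI : Nonempty {P : StrongDual ℂ X →L[ℂ] StrongDual ℂ X //
      (∀ x, P x ∈ (M : Set (StrongDual ℂ X))) ∧
      ∀ x ∈ (M : Set (StrongDual ℂ X)), P x = x} := ⟨⟨P₀, hP₀⟩⟩
  set lam := projConst (M : Set (StrongDual ℂ X)) with hlam
  have hlt : lam < ⊤ :=
    lt_of_le_of_lt (iInf_le (fun Q : {Q : StrongDual ℂ X →L[ℂ] StrongDual ℂ X //
      (∀ x, Q x ∈ (M : Set (StrongDual ℂ X))) ∧
      ∀ x ∈ (M : Set (StrongDual ℂ X)), Q x = x} => (‖Q.1‖₊ : ℝ≥0∞)) ⟨P₀, hP₀⟩) ENNReal.coe_lt_top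
  set c := lam.toReal with hc
  have hc0 : (0 : ℝ) ≤ c := ENNReal.toReal_nonneg
  have hofc : ENNReal.ofReal c = lam := ENNReal.ofReal_toReal hlt.ne
  -- the bound sequence
  set r : ℕ → ℝ := fun n => c + 1 / (n + 1) with hr
  have hr_pos : ∀ n, 0 < r n := fun n => by positivity
  -- the sets of approximate projections
  set S : ℕ → Set (StrongDual ℂ X → WeakDual ℂ X) := fun n =>
    {g | (∀ x y, g (x + y) = g x + g y) ∧ (∀ (a : ℂ) (x), g (a • x) = a • g x) ∧
      (∀ x, g x ∈ StrongDual.toWeakDual '' (M : Set (StrongDual ℂ X))) ∧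
      (∀ x ∈ M, g x = StrongDual.toWeakDual x) ∧
      ∀ x, ‖WeakDual.toStrongDual (g x)‖ ≤ r n * ‖x‖} with hS
  have hS_closed : ∀ n, IsClosed (S n) := by
    intro n
    simp only [hS, Set.setOf_and, Set.setOf_forall]
    refine IsClosed.inter ?_ (IsClosed.inter ?_ (IsClosed.inter ?_ (IsClosed.inter ?_ ?_)))
    · exact isClosed_iInter fun x => isClosed_iInter fun y =>
        isClosed_eq (continuous_apply (x + y))
          ((continuous_apply x).add (continuous_apply y))
    · exact isClosed_iInter fun a => isClosed_iInter fun x =>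
        isClosed_eq (continuous_apply (a • x)) ((continuous_apply x).const_smul a)
    · exact isClosed_iInter fun x => hM.preimage (continuous_apply x)
    · exact isClosed_iInter fun x => isClosed_iInter fun _ =>
        isClosed_eq (continuous_apply x) continuous_const
    · refine isClosed_iInter fun x => ?_
      have hcpt : IsCompact (WeakDual.toStrongDual ⁻¹'
          closedBall (0 : StrongDual ℂ X) (r n * ‖x‖)) :=
        WeakDual.isCompact_closedBall (𝕜 := ℂ) (0 : StrongDual ℂ X) (r n * ‖x‖)
      have hcl := hcpt.isClosed
      have heq : {g : StrongDual ℂ X → WeakDual ℂ X |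
          ‖WeakDual.toStrongDual (g x)‖ ≤ r n * ‖x‖} =
          (fun g : StrongDual ℂ X → WeakDual ℂ X => g x) ⁻¹'
          (WeakDual.toStrongDual ⁻¹' closedBall (0 : StrongDual ℂ X) (r n * ‖x‖)) := by
        ext g; simp [mem_closedBall_zero_iff]
      rw [heq]
      exact hcl.preimage (continuous_apply x)
  have hS_compact : ∀ n, IsCompact (S n) := by
    intro n
    have hK : IsCompact {g : StrongDual ℂ X → WeakDual ℂ X |
        ∀ x, g x ∈ WeakDual.toStrongDual ⁻¹' closedBall 0 (r n * ‖x‖)} :=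
      isCompact_pi_infinite fun x =>
        WeakDual.isCompact_closedBall (𝕜 := ℂ) (0 : StrongDual ℂ X) (r n * ‖x‖)
    refine hK.of_isClosed_subset (hS_closed n) ?_
    rintro g ⟨-, -, -, -, h5⟩ x
    simpa [mem_closedBall_zero_iff] using h5 x
  have hS_ne : ∀ n, (S n).Nonempty := by
    intro n
    have hlt' : lam < ENNReal.ofReal (r n) := by
      rw [← hofc]
      refine ENNReal.ofReal_lt_ofReal_iff (hr_pos n) |>.mpr ?_
      have hrn : r n = c + 1 / (n + 1) := rfl
      have : (0:ℝ) < 1 / ((n:ℝ) + 1) := by positivity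
      rw [hrn]; linarith
    rw [hlam, projConst, iInf_lt_iff] at hlt'
    obtain ⟨⟨P, hPmem, hPid⟩, hPlt⟩ := hlt'
    have hPn : ‖P‖ ≤ r n := by
      have := (ENNReal.lt_ofReal_iff_toReal_lt (by simp)).mp hPlt
      simpa using this.le
    refine ⟨fun x => StrongDual.toWeakDual (P x), ?_, ?_, ?_, ?_, ?_⟩
    · intro x y; simp [map_add]
    · intro a x; simp [map_smul]
    · intro x; exact ⟨P x, hPmem x, rfl⟩
    · intro x hx; exact congrArg _ (hPid x hx)
    · intro x
      have : WeakDual.toStrongDual (StrongDual.toWeakDual (P x)) = P x := rfl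
      rw [this]
      calc ‖P x‖ ≤ ‖P‖ * ‖x‖ := P.le_opNorm x
        _ ≤ r n * ‖x‖ := by gcongr
  -- intersection nonempty
  have hdir : Directed (· ⊇ ·) S := by
    have hanti : Antitone S := by
      intro m n hmn g hg
      obtain ⟨h1, h2, h3, h4, h5⟩ := hg
      refine ⟨h1, h2, h3, h4, fun x => (h5 x).trans ?_⟩
      have : r n ≤ r m := by
        have : (1 : ℝ) / (n + 1) ≤ 1 / (m + 1) := by
          apply one_div_le_one_div_of_le (by positivity)
          exact_mod_cast Nat.succ_le_succ hmn
        simp only [hr]; linarith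
      have hx : (0:ℝ) ≤ ‖x‖ := norm_nonneg x
      nlinarith
    exact hanti.directed_ge
  obtain ⟨g, hg⟩ := IsCompact.nonempty_iInter_of_directed_nonempty_isCompact_isClosed
    S hdir hS_ne hS_compact hS_closed
  have hg' : ∀ n, g ∈ S n := fun n => Set.mem_iInter.mp hg n
  obtain ⟨hadd, hsmul, hmem, hid, -⟩ := hg' 0
  have hbound : ∀ x, ‖WeakDual.toStrongDual (g x)‖ ≤ c * ‖x‖ := by
    intro x
    have hlim : Tendsto (fun n : ℕ => r n * ‖x‖) atTop (𝓝 (c * ‖x‖)) := by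
      have h1 : Tendsto (fun n : ℕ => (1:ℝ) / (n + 1)) atTop (𝓝 0) :=
        tendsto_one_div_add_atTop_nhds_zero_nat
      have h2 : Tendsto (fun n : ℕ => c + 1 / ((n : ℝ) + 1)) atTop (𝓝 (c + 0)) :=
        (tendsto_const_nhds (x := c)).add h1
      have h3 := h2.mul_const ‖x‖
      rw [add_zero] at h3
      exact h3
    exact ge_of_tendsto' hlim fun n => (hg' n).2.2.2.2 x
  set f : StrongDual ℂ X →ₗ[ℂ] StrongDual ℂ X :=
    { toFun := fun x => WeakDual.toStrongDual (g x)
      map_add' := fun x y => by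
        show WeakDual.toStrongDual (g (x + y)) =
          WeakDual.toStrongDual (g x) + WeakDual.toStrongDual (g y)
        rw [hadd]; exact map_add _ _ _
      map_smul' := fun a x => by
        show WeakDual.toStrongDual (g (a • x)) = a • WeakDual.toStrongDual (g x)
        rw [hsmul]; exact map_smul _ _ _ } with hf
  obtain ⟨P, hPapp⟩ : ∃ P : StrongDual ℂ X →L[ℂ] StrongDual ℂ X,
      ∀ x, P x = WeakDual.toStrongDual (g x) :=
    ⟨f.mkContinuous c hbound, fun x => rfl⟩
  have hPmem : ∀ x, P x ∈ M := by
    intro x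
    obtain ⟨y, hy, hyx⟩ := hmem x
    rw [hPapp x, ← hyx]
    exact hy
  have hPid : ∀ x ∈ M, P x = x := by
    intro x hx
    rw [hPapp x, hid x hx]
    rfl
  refine ⟨P, hPmem, hPid, le_antisymm ?_ ?_⟩
  · have h1 : ‖P‖ ≤ c := P.opNorm_le_bound hc0 fun x => by rw [hPapp]; exact hbound x
    calc ((‖P‖₊ : ℝ≥0∞)) = ENNReal.ofReal ‖P‖ := (ofReal_norm P).symm
      _ ≤ ENNReal.ofReal c := ENNReal.ofReal_le_ofReal h1
      _ = lam := hofc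
  · exact iInf_le (fun Q : {Q : StrongDual ℂ X →L[ℂ] StrongDual ℂ X //
      (∀ x, Q x ∈ (M : Set (StrongDual ℂ X))) ∧
      ∀ x ∈ (M : Set (StrongDual ℂ X)), Q x = x} => (‖Q.1‖₊ : ℝ≥0∞)) ⟨P, hPmem, hPid⟩
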